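/- For any two permutations σ and τ of {1,…,p}, the intersection K_σ ∩ K_τ equals the convex hull of the common vertex set {v_0^σ,…,v_p^σ} ∩ {v_0^τ,…,v_p^τ}; in particular any two simplices of the standard simplicial decomposition of the cube meet in a common face. -/
import Mathlib


open Set

/-- The vertex `v_k^σ = e_{σ(1)} + ⋯ + e_{σ(k)}` of the simplex `K_σ`
(0-indexed: the sum of `e_{σ(i)}` over the first `k` indices `i`). -/
def cubeVtx (p : ℕ) (σ : Equiv.Perm (Fin p)) (k : ℕ) : Fin p → ℝ :=
  ∑ i ∈ Finset.univ.filter fun i : Fin p => (i : ℕ) < k, Pi.single (σ i) 1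

/-- The simplex `K_σ`, the convex hull of the `p+1` points `v_0^σ, …, v_p^σ`. -/
def Ksimp (p : ℕ) (σ : Equiv.Perm (Fin p)) : Set (Fin p → ℝ) :=
  convexHull ℝ {x | ∃ k ≤ p, x = cubeVtx p σ k}

/-- The unit cube `[0,1]^p`. -/
def unitCube (p : ℕ) : Set (Fin p → ℝ) :=
  {x | ∀ i, x i ∈ Icc (0 : ℝ) 1}

/-! ### Auxiliary development -/

/-- The "extended coordinate sequence": `Yf p σ x 0 = 1`, `Yf p σ x k = x (σ (k-1))`
for `1 ≤ k ≤ p`, and `Yf p σ x k = 0` for `k > p`. -/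
def Yf (p : ℕ) (σ : Equiv.Perm (Fin p)) (x : Fin p → ℝ) (k : ℕ) : ℝ :=
  if h : 1 ≤ k ∧ k ≤ p then x (σ ⟨k - 1, by omega⟩) else if k = 0 then 1 else 0

lemma Yf_zero (p : ℕ) (σ : Equiv.Perm (Fin p)) (x : Fin p → ℝ) : Yf p σ x 0 = 1 := by
  simp [Yf]

lemma Yf_top (p : ℕ) (σ : Equiv.Perm (Fin p)) (x : Fin p → ℝ) {k : ℕ} (hk : p < k) :
    Yf p σ x k = 0 := by
  have h1 : ¬ (1 ≤ k ∧ k ≤ p) := by omega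
  have h2 : k ≠ 0 := by omega
  simp [Yf, h1, h2]

lemma Yf_mid (p : ℕ) (σ : Equiv.Perm (Fin p)) (x : Fin p → ℝ) (i : Fin p) :
    Yf p σ x ((i : ℕ) + 1) = x (σ i) := by
  have h : 1 ≤ (i : ℕ) + 1 ∧ (i : ℕ) + 1 ≤ p := ⟨by omega, i.isLt⟩
  simp [Yf, h]

/-- The "ordered" region attached to `σ`. -/
def Oset (p : ℕ) (σ : Equiv.Perm (Fin p)) : Set (Fin p → ℝ) :=
  {x | ∀ k : ℕ, Yf p σ x (k + 1) ≤ Yf p σ x k}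

lemma Yf_combo (p : ℕ) (σ : Equiv.Perm (Fin p)) (x z : Fin p → ℝ) (a b : ℝ)
    (hab : a + b = 1) (k : ℕ) :
    Yf p σ (a • x + b • z) k = a * Yf p σ x k + b * Yf p σ z k := by
  unfold Yf
  split
  · simp only [Pi.add_apply, Pi.smul_apply, smul_eq_mul]
  · split
    · linarith
    · ring

lemma convex_Oset (p : ℕ) (σ : Equiv.Perm (Fin p)) : Convex ℝ (Oset p σ) := by
  intro x hx z hz a b ha hb hab
  intro k
  rw [Yf_combo p σ x z a b hab, Yf_combo p σ x z a b hab]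
  have h1 := hx k
  have h2 := hz k
  nlinarith

lemma cubeVtx_apply (p : ℕ) (σ : Equiv.Perm (Fin p)) (k : ℕ) (j : Fin p) :
    cubeVtx p σ k j = if ((σ.symm j : Fin p) : ℕ) < k then 1 else 0 := by
  classical
  unfold cubeVtx
  rw [Finset.sum_apply]
  have : ∀ i : Fin p, (Pi.single (σ i) (1 : ℝ) : Fin p → ℝ) j
      = if i = σ.symm j then 1 else 0 := by
    intro i
    rw [Pi.single_apply]
    congr 1
    rw [eq_iff_iff]
    exact eq_comm.trans (Equiv.apply_eq_iff_eq_symm_apply σ)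
  simp_rw [this]
  rw [Finset.sum_ite_eq' _ (σ.symm j) (fun _ => (1 : ℝ))]
  simp

lemma Yf_cubeVtx (p : ℕ) (σ : Equiv.Perm (Fin p)) (m k : ℕ) :
    Yf p σ (cubeVtx p σ m) k = if k ≤ min m p then 1 else 0 := by
  unfold Yf
  split
  · rename_i h
    rw [cubeVtx_apply]
    simp only [Equiv.symm_apply_apply]
    by_cases hkm : k - 1 < m
    · rw [if_pos (show ((⟨k - 1, by omega⟩ : Fin p) : ℕ) < m from hkm), if_pos (by omega)]
    · rw [if_neg (show ¬ ((⟨k - 1, by omega⟩ : Fin p) : ℕ) < m from hkm), if_neg (by omega)]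
  · rename_i h
    by_cases hk : k = 0
    · rw [if_pos hk, if_pos (by omega)]
    · rw [if_neg hk, if_neg (by omega)]

lemma cubeVtx_mem_Oset (p : ℕ) (σ : Equiv.Perm (Fin p)) (m : ℕ) :
    cubeVtx p σ m ∈ Oset p σ := by
  intro k
  rw [Yf_cubeVtx, Yf_cubeVtx]
  by_cases h : k + 1 ≤ min m p
  · rw [if_pos h, if_pos (by omega)]
  · rw [if_neg h]
    split <;> norm_num

lemma Ksimp_subset_Oset (p : ℕ) (σ : Equiv.Perm (Fin p)) : Ksimp p σ ⊆ Oset p σ := by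
  apply convexHull_min _ (convex_Oset p σ)
  rintro x ⟨k, _, rfl⟩
  exact cubeVtx_mem_Oset p σ k

lemma antitone_Yf (p : ℕ) (σ : Equiv.Perm (Fin p)) {x : Fin p → ℝ} (hx : x ∈ Oset p σ) :
    Antitone (Yf p σ x) :=
  antitone_nat_of_succ_le hx

lemma antitone_along (p : ℕ) (σ : Equiv.Perm (Fin p)) {x : Fin p → ℝ} (hx : x ∈ Oset p σ)
    {i i' : Fin p} (h : i ≤ i') : x (σ i') ≤ x (σ i) := by
  rw [← Yf_mid p σ x i, ← Yf_mid p σ x i']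
  exact antitone_Yf p σ hx (by omega)

/-- Partial telescoping sum. -/
lemma sum_ite_telescope (f : ℕ → ℝ) (i : ℕ) :
    ∀ n, i < n →
      ∑ k ∈ Finset.range n, (if i < k then f k - f (k + 1) else 0) = f (i + 1) - f n := by
  intro n
  induction n with
  | zero => omega
  | succ n ih =>
    intro hn
    rw [Finset.sum_range_succ]
    rcases Nat.lt_or_ge i n with h | h
    · rw [ih h, if_pos h]; ring
    · have : i = n := by omega
      subst this
      have : ∑ k ∈ Finset.range i, (if i < k then f k - f (k + 1) else 0) = 0 := by
        apply Finset.sum_eq_zero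
        intro k hk
        rw [Finset.mem_range] at hk
        rw [if_neg (by omega)]
      rw [this, if_neg (lt_irrefl i)]
      ring

/-- The barycentric decomposition of a point of `Oset p σ`. -/
lemma Oset_eq_sum (p : ℕ) (σ : Equiv.Perm (Fin p)) {x : Fin p → ℝ} (hx : x ∈ Oset p σ) :
    ∑ k ∈ Finset.range (p + 1), (Yf p σ x k - Yf p σ x (k + 1)) • cubeVtx p σ k = x := by
  funext j
  rw [Finset.sum_apply]
  simp_rw [Pi.smul_apply, cubeVtx_apply, smul_eq_mul, mul_ite, mul_one, mul_zero]
  have : ∀ k, (if ((σ.symm j : Fin p) : ℕ) < k then Yf p σ x k - Yf p σ x (k + 1) else 0)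
      = (if ((σ.symm j : Fin p) : ℕ) < k then Yf p σ x k - Yf p σ x (k + 1) else 0) := fun _ => rfl
  have hlt : ((σ.symm j : Fin p) : ℕ) < p + 1 := by
    have := (σ.symm j).isLt; omega
  rw [show (∑ k ∈ Finset.range (p + 1),
      if ((σ.symm j : Fin p) : ℕ) < k then Yf p σ x k - Yf p σ x (k + 1) else 0)
      = Yf p σ x (((σ.symm j : Fin p) : ℕ) + 1) - Yf p σ x (p + 1) from
    sum_ite_telescope (Yf p σ x) _ (p + 1) hlt]
  rw [Yf_mid, Yf_top p σ x (by omega), Equiv.apply_symm_apply]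
  ring

lemma sum_weights (p : ℕ) (σ : Equiv.Perm (Fin p)) (x : Fin p → ℝ) :
    ∑ k ∈ Finset.range (p + 1), (Yf p σ x k - Yf p σ x (k + 1)) = 1 := by
  rw [Finset.sum_range_sub' (Yf p σ x), Yf_zero, Yf_top p σ x (by omega)]
  ring

/-- Key combinatorial step: if the weight of `cubeVtx p σ k` in the barycentric
decomposition of `x ∈ Oset p σ ∩ Oset p τ` is nonzero, then that vertex is also a vertex
of `K_τ`. -/
lemma common_vertex (p : ℕ) (σ τ : Equiv.Perm (Fin p)) {x : Fin p → ℝ}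
    (hxσ : x ∈ Oset p σ) (hxτ : x ∈ Oset p τ) {k : ℕ} (hk : k ≤ p)
    (hw : Yf p σ x (k + 1) < Yf p σ x k) :
    ∃ m ≤ p, cubeVtx p σ k = cubeVtx p τ m := by
  classical
  -- trivial extreme cases
  rcases Nat.eq_zero_or_pos k with rfl | hk0
  · refine ⟨0, by omega, ?_⟩
    funext j; rw [cubeVtx_apply, cubeVtx_apply]; simp
  rcases Nat.eq_or_lt_of_le hk with heq | hkp
  · refine ⟨p, le_refl p, ?_⟩
    funext j
    have h1 : ((σ.symm j : Fin p) : ℕ) < k := heq ▸ (σ.symm j).isLt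
    rw [cubeVtx_apply, cubeVtx_apply, if_pos h1, if_pos (τ.symm j).isLt]
  -- main case : 1 ≤ k < p
  set t : ℝ := Yf p σ x (k + 1) with ht
  have htval : t = x (σ ⟨k, hkp⟩) := by
    rw [ht, ← Yf_mid p σ x ⟨k, hkp⟩]
  have htop : Yf p σ x k = x (σ ⟨k - 1, by omega⟩) := by
    rw [← Yf_mid p σ x ⟨k - 1, by omega⟩]
    congr 1
    show k = k - 1 + 1
    omega
  -- characterization along σ
  have hσchar : ∀ j : Fin p, ((σ.symm j : Fin p) : ℕ) < k ↔ t < x j := by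
    intro j
    set i := σ.symm j with hi
    have hxj : x j = x (σ i) := by rw [hi, Equiv.apply_symm_apply]
    rw [hxj]
    constructor
    · intro hik
      have h1 : x (σ ⟨k - 1, by omega⟩) ≤ x (σ i) := by
        apply antitone_along p σ hxσ
        rw [Fin.le_def]
        show (i : ℕ) ≤ k - 1
        omega
      calc t < Yf p σ x k := hw
        _ = x (σ ⟨k - 1, by omega⟩) := htop
        _ ≤ x (σ i) := h1
    · intro hti
      by_contra hik
      have h1 : x (σ i) ≤ x (σ ⟨k, hkp⟩) := by
        apply antitone_along p σ hxσ
        rw [Fin.le_def]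
        show (i : ℕ) ≥ k
        omega
      rw [htval] at hti
      exact absurd hti (not_lt.2 h1)
  -- the predicate along τ is downward closed
  have hdc : ∀ i i' : Fin p, i ≤ i' → t < x (τ i') → t < x (τ i) :=
    fun i i' h h' => lt_of_lt_of_le h' (antitone_along p τ hxτ h)
  -- find the cutoff m for τ
  by_cases hall : ∀ i : Fin p, t < x (τ i)
  · refine ⟨p, le_refl p, ?_⟩
    funext j
    rw [cubeVtx_apply, cubeVtx_apply, if_pos (τ.symm j).isLt]
    rw [if_pos ((hσchar j).2 (by simpa using hall (τ.symm j)))]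
  · push_neg at hall
    have hex : ∃ n : ℕ, ∃ h : n < p, ¬ t < x (τ ⟨n, h⟩) := by
      obtain ⟨i, hi⟩ := hall
      exact ⟨(i : ℕ), i.isLt, by simpa using hi⟩
    set m := Nat.find hex with hm
    obtain ⟨hmlt, hmneg⟩ := Nat.find_spec hex
    refine ⟨m, le_of_lt hmlt, ?_⟩
    have hτchar : ∀ j : Fin p, ((τ.symm j : Fin p) : ℕ) < m ↔ t < x j := by
      intro j
      set i := τ.symm j with hi
      have hxj : x j = x (τ i) := by rw [hi, Equiv.apply_symm_apply]
      rw [hxj]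
      constructor
      · intro him
        by_contra hcon
        have hle : Nat.find hex ≤ (i : ℕ) :=
          Nat.find_min' hex ⟨i.isLt, by simpa using hcon⟩
        omega
      · intro hti
        by_contra him
        apply hmneg
        exact hdc ⟨m, hmlt⟩ i (by rw [Fin.le_def]; show m ≤ (i : ℕ); omega) hti
    funext j
    rw [cubeVtx_apply, cubeVtx_apply]
    by_cases hc : ((σ.symm j : Fin p) : ℕ) < k
    · rw [if_pos hc, if_pos ((hτchar j).2 ((hσchar j).1 hc))]
    · rw [if_neg hc, if_neg (fun hm' => hc ((hσchar j).2 ((hτchar j).1 hm')))]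

/-- Any two simplices of the standard simplicial decomposition of the cube meet in a
common face: `K_σ ∩ K_τ` is the convex hull of the common vertices. -/
theorem Ksimp_inter_eq_convexHull_common_vertices (p : ℕ) (hp : 1 ≤ p)
    (σ τ : Equiv.Perm (Fin p)) :
    Ksimp p σ ∩ Ksimp p τ =
      convexHull ℝ
        ({x | ∃ k ≤ p, x = cubeVtx p σ k} ∩ {x | ∃ k ≤ p, x = cubeVtx p τ k}) := by
  classical
  apply Set.Subset.antisymm
  · rintro x ⟨hxσK, hxτK⟩
    have hxσ : x ∈ Oset p σ := Ksimp_subset_Oset p σ hxσK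
    have hxτ : x ∈ Oset p τ := Ksimp_subset_Oset p τ hxτK
    set w : ℕ → ℝ := fun k => Yf p σ x k - Yf p σ x (k + 1) with hwdef
    have hw0 : ∀ k, 0 ≤ w k := fun k => sub_nonneg.2 (hxσ k)
    have hsum : ∑ k ∈ Finset.range (p + 1), w k = 1 := sum_weights p σ x
    set s := (Finset.range (p + 1)).filter (fun k => w k ≠ 0) with hs
    have hmem : ∀ k ∈ s, cubeVtx p σ k ∈
        ({x | ∃ k ≤ p, x = cubeVtx p σ k} ∩ {x | ∃ k ≤ p, x = cubeVtx p τ k}) := by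
      intro k hk
      rw [hs, Finset.mem_filter, Finset.mem_range] at hk
      obtain ⟨hkr, hkw⟩ := hk
      have hkp : k ≤ p := by omega
      have hwpos : Yf p σ x (k + 1) < Yf p σ x k := by
        rcases lt_or_eq_of_le (hxσ k) with h | h
        · exact h
        · exfalso; apply hkw; rw [hwdef]; simp [h]
      obtain ⟨m, hm, hmeq⟩ := common_vertex p σ τ hxσ hxτ hkp hwpos
      exact ⟨⟨k, hkp, rfl⟩, ⟨m, hm, hmeq⟩⟩
    have hsums : ∑ k ∈ s, w k = 1 := by
      rw [hs, Finset.sum_filter_ne_zero, hsum]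
    have hcm : s.centerMass w (cubeVtx p σ) = x := by
      rw [hs, Finset.centerMass_filter_ne_zero,
        Finset.centerMass_eq_of_sum_1 _ _ hsum]
      exact Oset_eq_sum p σ hxσ
    rw [← hcm]
    exact Finset.centerMass_mem_convexHull s (fun k _ => hw0 k)
      (by rw [hsums]; norm_num) hmem
  · apply subset_inter
    · refine (convexHull_mono (inter_subset_left)).trans ?_
      exact le_refl _
    · refine (convexHull_mono (inter_subset_right)).trans ?_
      exact le_refl _
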